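/- Let V be a finite-dimensional linear subspace of the real vector space of all functions ℝ≥0 → ℝ, and let g : ℝ≥0 → ℝ be a function such that the pointwise power gⁿ belongs to V for every integer n ≥ 1. Then the range of g is a finite set. -/

import Mathlib

open scoped NNReal

theorem stmt10
    (V : Submodule ℝ (ℝ≥0 → ℝ)) (hV : FiniteDimensional ℝ V)
    (g : ℝ≥0 → ℝ)
    (hpow : ∀ n : ℕ, 1 ≤ n → (fun x : ℝ≥0 => g x ^ n) ∈ V) :
    (Set.range g).Finite := by
  by_contra hinf
  replace hinf : (Set.range g).Infinite := hinf
  set d := Module.finrank ℝ V with hd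
  set fam : Fin (d + 1) → V :=
    fun n => ⟨fun x : ℝ≥0 => g x ^ ((n : ℕ) + 1), hpow _ (by omega)⟩ with hfam
  have hli : LinearIndependent ℝ fam := by
    rw [Fintype.linearIndependent_iff]
    intro c hc n₀
    have hc' : ∀ x : ℝ≥0, ∑ n : Fin (d + 1), c n * g x ^ ((n : ℕ) + 1) = 0 := by
      intro x
      have := congrArg (fun v : V => (v : ℝ≥0 → ℝ) x) hc
      simpa [hfam, Finset.sum_apply] using this
    set p : Polynomial ℝ := ∑ n : Fin (d + 1), Polynomial.C (c n) * Polynomial.X ^ ((n : ℕ) + 1)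
      with hp
    have hroot : ∀ y ∈ Set.range g, p.IsRoot y := by
      rintro y ⟨x, rfl⟩
      simp [hp, Polynomial.IsRoot, Polynomial.eval_finset_sum, hc' x]
    have hp0 : p = 0 := by
      apply Polynomial.eq_zero_of_infinite_isRoot
      exact hinf.mono hroot
    have := congrArg (fun q : Polynomial ℝ => q.coeff ((n₀ : ℕ) + 1)) hp0
    simp only [hp, Polynomial.finset_sum_coeff, Polynomial.coeff_C_mul,
      Polynomial.coeff_X_pow, Polynomial.coeff_zero] at this
    rwa [Finset.sum_eq_single n₀ (by
        intro b _ hb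
        have : ((b : ℕ) + 1) ≠ ((n₀ : ℕ) + 1) := by
          simpa [Fin.ext_iff] using fun h => hb (by omega)
        simp [Ne.symm this]; intro h; exact absurd (by omega : (b : ℕ) + 1 = (n₀ : ℕ) + 1) this) (by simp), if_pos rfl, mul_one] at this
  have hcard := hli.fintype_card_le_finrank
  simp [hd] at hcard
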